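/- Let e > 1 be an odd integer and let X be a β-set of rank n which is an e-core, such that the set X' = {x ∈ X : x + e ∉ X} has exactly e elements. Let Y be the set of even elements of X' and Z the set of odd elements of X', with a = |Y| and b = |Z|, and suppose b > a ≥ 1; set c = b − a. Let x_α be the largest element of Y and let λ(x_α) = x_α − #{x ∈ X : x < x_α}. Then n − λ(x_α) + #{x ∈ X : x is odd and 0 < x − x_α < e} ≥ c. -/

import Mathlib

/-- The rank of a β-set `S` of size `s`: `(Σ_{x∈S} x) − s(s−1)/2`. -/
def brank (S : Finset ℕ) : ℕ := (∑ x ∈ S, x) - S.card * (S.card - 1) / 2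

/-- A β-set is an `e`-core if `x − e ∈ S` for every `x ∈ S` with `x ≥ e`. -/
def IsCore (e : ℕ) (S : Finset ℕ) : Prop := ∀ x ∈ S, e ≤ x → x - e ∈ S

namespace UPB
open Finset

/-- number of gaps (non-elements) below x -/
def gapc (S : Finset ℕ) (x : ℕ) : ℕ := ((range x).filter (· ∉ S)).card

lemma two_sum_below (S : Finset ℕ) :
    2 * (∑ x ∈ S, (S.filter (· < x)).card) = S.card * (S.card - 1) := by
  induction S using Finset.induction_on_max with
  | empty => simp
  | insert a s ha ih =>
    have hanotmem : a ∉ s := fun h => lt_irrefl a (ha a h)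
    rw [Finset.sum_insert hanotmem]
    have h1 : (insert a s).filter (· < a) = s := by
      rw [Finset.filter_insert, if_neg (lt_irrefl a)]
      exact Finset.filter_true_of_mem ha
    have h2 : ∀ x ∈ s, ((insert a s).filter (· < x)).card = (s.filter (· < x)).card := by
      intro x hx
      rw [Finset.filter_insert, if_neg (by exact fun h => absurd (ha x hx) (not_lt.mpr h.le))]
    rw [Finset.sum_congr rfl h2, h1, Finset.card_insert_of_notMem hanotmem]
    have h3 : ∀ n : ℕ, (n + 1) * ((n + 1) - 1) = n * (n - 1) + 2 * n := by
      intro n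
      cases n with
      | zero => rfl
      | succ m =>
        simp only [Nat.succ_sub_one, Nat.add_sub_cancel]
        ring
    rw [h3 s.card]
    omega

lemma below_add_gapc (S : Finset ℕ) (x : ℕ) :
    (S.filter (· < x)).card + gapc S x = x := by
  unfold gapc
  have h1 : S.filter (· < x) = (range x).filter (· ∈ S) := by
    ext y
    simp only [Finset.mem_filter, Finset.mem_range]
    tauto
  rw [h1, Finset.card_filter_add_card_filter_not (fun y => y ∈ S), Finset.card_range]

lemma brank_eq_gaps (S : Finset ℕ) : brank S = ∑ x ∈ S, gapc S x := by
  have h1 : ∑ x ∈ S, x = (∑ x ∈ S, (S.filter (· < x)).card) + ∑ x ∈ S, gapc S x := by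
    rw [← Finset.sum_add_distrib]
    exact Finset.sum_congr rfl fun x _ => (below_add_gapc S x).symm
  have h2 := two_sum_below S
  unfold brank
  omega

/-- the set of pairs (gap, element ≠ xa above it) -/
def Pfin (S : Finset ℕ) (xa : ℕ) : Finset (ℕ × ℕ) :=
  (S.erase xa).biUnion fun x => ((range x).filter (· ∉ S)).image fun y => (y, x)

lemma mem_Pfin {S : Finset ℕ} {xa : ℕ} {z : ℕ × ℕ} :
    z ∈ Pfin S xa ↔ z.2 ∈ S ∧ z.2 ≠ xa ∧ z.1 < z.2 ∧ z.1 ∉ S := by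
  unfold Pfin
  simp only [Finset.mem_biUnion, Finset.mem_erase, Finset.mem_image, Finset.mem_filter,
    Finset.mem_range]
  constructor
  · rintro ⟨x, ⟨hxne, hxS⟩, y, ⟨hy1, hy2⟩, rfl⟩
    exact ⟨hxS, hxne, hy1, hy2⟩
  · rintro ⟨h1, h2, h3, h4⟩
    exact ⟨z.2, ⟨h2, h1⟩, z.1, ⟨h3, h4⟩, rfl⟩

lemma card_Pfin (S : Finset ℕ) (xa : ℕ) (hxa : xa ∈ S) :
    (Pfin S xa).card + gapc S xa = brank S := by
  unfold Pfin
  rw [Finset.card_biUnion]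
  · have h1 : ∀ x ∈ S.erase xa, (((range x).filter (· ∉ S)).image fun y => (y, x)).card
        = gapc S x := by
      intro x _
      have hinj : Function.Injective (fun y : ℕ => (y, x)) := by
        intro a b h
        simpa using h
      rw [Finset.card_image_of_injective _ hinj]
      rfl
    rw [Finset.sum_congr rfl h1, brank_eq_gaps]
    exact Finset.sum_erase_add S (gapc S) hxa
  · intro x hx y hy hxy
    simp only [Finset.disjoint_left]
    intro z hz hz'
    simp only [Finset.mem_image, Finset.mem_filter] at hz hz'
    obtain ⟨a, _, rfl⟩ := hz
    obtain ⟨b, _, hb⟩ := hz'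
    have h5 := congrArg Prod.snd hb
    simp only at h5
    exact hxy h5.symm

lemma core_down_j {e : ℕ} {S : Finset ℕ} (hS : IsCore e S) :
    ∀ j, ∀ x ∈ S, e * j ≤ x → x - e * j ∈ S := by
  intro j
  induction j with
  | zero => intro x hx _; simpa using hx
  | succ m ihm =>
    intro x hx hj
    have hm1 : e * (m+1) = e * m + e := by ring
    have h2 := hS _ (ihm x hx (by omega)) (by omega)
    have heq : x - e * m - e = x - e * (m+1) := by omega
    rwa [heq] at h2

lemma core_down {e : ℕ} {S : Finset ℕ} (hS : IsCore e S) :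
    ∀ x ∈ S, ∀ y, y % e = x % e → y ≤ x → y ∈ S := by
  intro x hx y hmod hle
  rcases Nat.eq_zero_or_pos e with he | he
  · subst he
    rw [Nat.mod_zero, Nat.mod_zero] at hmod
    rwa [hmod]
  · have hdvd : e ∣ x - y := (Nat.modEq_iff_dvd' hle).mp hmod
    obtain ⟨j, hj⟩ := hdvd
    have hy : y = x - e * j := by omega
    rw [hy]
    exact core_down_j hS j x hx (by omega)

def Afun (d : ℤ) : ℤ := if d = -1 ∨ d = 3 then 1 else if -1 < d ∧ d < 3 then 0 else 2

def epsf (u : ℕ) (d : ℤ) : ℤ := if Odd ((u : ℤ) + d) then 1 else -1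

def wf (d : ℤ) : ℤ := if d ≤ 0 ∧ Even d then 1 else 0

def qual (a b : ℤ) : Prop := 1 ≤ a - b ∨ a - b ≤ -2

instance (a b : ℤ) : Decidable (qual a b) := by unfold qual; infer_instance

def Qset (m : ℕ) (d : ℕ → ℤ) : Finset (ℕ × ℕ) :=
  (Finset.Icc 1 m ×ˢ Finset.Icc 1 m).filter fun p => p.1 < p.2 ∧ qual (d p.1) (d p.2)

lemma Afun_nonneg (d : ℤ) : 0 ≤ Afun d := by
  unfold Afun; split <;> [norm_num; split <;> norm_num]

lemma wf_nonneg (d : ℤ) : 0 ≤ wf d := by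
  unfold wf; split <;> norm_num

lemma epsf_le_one (u : ℕ) (d : ℤ) : epsf u d ≤ 1 := by
  unfold epsf; split <;> norm_num

lemma odd_emod (z : ℤ) : Odd z ↔ z % 2 = 1 := Int.odd_iff

lemma epsf_eval_odd (u : ℕ) (d : ℤ) (h : ((u:ℤ) + d) % 2 = 1) : epsf u d = 1 := by
  unfold epsf; rw [if_pos (Int.odd_iff.mpr h)]

lemma epsf_eval_even (u : ℕ) (d : ℤ) (h : ((u:ℤ) + d) % 2 = 0) : epsf u d = -1 := by
  unfold epsf
  rw [if_neg]
  rw [Int.odd_iff]; omega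

lemma Afun_big (d : ℤ) (h : d ≤ -2 ∨ 4 ≤ d) : Afun d = 2 := by
  unfold Afun
  rw [if_neg (by omega), if_neg (by omega)]

-- psi bounds
lemma psi_odd_bound (u : ℕ) (d : ℤ) (hu : u % 2 = 1)
    (hc : d ≤ 0 → Odd ((u : ℤ) + d)) (hd : d ≠ 2) :
    epsf u d ≤ Afun d + wf d := by
  have hu' : (u : ℤ) % 2 = 1 := by omega
  rcases lt_trichotomy d 0 with h | h | h
  · -- d < 0
    rcases eq_or_lt_of_le (show d ≤ -1 by omega) with h1 | h1
    · -- d = -1 : impossible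
      exfalso
      have := Int.odd_iff.mp (hc (by omega))
      omega
    · have hA : Afun d = 2 := Afun_big d (by omega)
      have := epsf_le_one u d
      have := wf_nonneg d
      omega
  · subst h
    have he : epsf u 0 = 1 := epsf_eval_odd u 0 (by omega)
    have : wf 0 = 1 := by unfold wf; rw [if_pos ⟨le_refl 0, Even.zero⟩]
    have : Afun 0 = 0 := by unfold Afun; rw [if_neg (by omega), if_pos (by omega)]
    omega
  · -- d ≥ 1
    rcases eq_or_lt_of_le (show 1 ≤ d by omega) with h1 | h1
    · -- d = 1
      have he : epsf u 1 = -1 := epsf_eval_even u 1 (by omega)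
      have hA := Afun_nonneg (1:ℤ)
      have hw := wf_nonneg (1:ℤ)
      rw [← h1] at *
      omega
    · rcases eq_or_lt_of_le (show 3 ≤ d by omega) with h3 | h3
      · -- d = 3
        have hA : Afun d = 1 := by unfold Afun; rw [if_pos (by omega)]
        have := epsf_le_one u d
        have := wf_nonneg d
        omega
      · have hA : Afun d = 2 := Afun_big d (by omega)
        have := epsf_le_one u d
        have := wf_nonneg d
        omega

lemma psi_odd_strong (u : ℕ) (d : ℤ) (hu : u % 2 = 1)
    (hc : d ≤ 0 → Odd ((u : ℤ) + d)) (hd0 : d ≠ 0) (hd2 : d ≠ 2) :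
    epsf u d + 1 ≤ Afun d + wf d := by
  have hu' : (u : ℤ) % 2 = 1 := by omega
  rcases lt_trichotomy d 0 with h | h | h
  · rcases eq_or_lt_of_le (show d ≤ -1 by omega) with h1 | h1
    · exfalso
      have := Int.odd_iff.mp (hc (by omega))
      omega
    · have hA : Afun d = 2 := Afun_big d (by omega)
      have := epsf_le_one u d
      have := wf_nonneg d
      omega
  · omega
  · rcases eq_or_lt_of_le (show 1 ≤ d by omega) with h1 | h1
    · have he : epsf u 1 = -1 := epsf_eval_even u 1 (by omega)
      have hA := Afun_nonneg (1:ℤ)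
      have hw := wf_nonneg (1:ℤ)
      rw [← h1] at *
      omega
    · rcases eq_or_lt_of_le (show 3 ≤ d by omega) with h3 | h3
      · have hA : Afun d = 1 := by unfold Afun; rw [if_pos (by omega)]
        have he : epsf u d = -1 := epsf_eval_even u d (by omega)
        have := wf_nonneg d
        omega
      · have hA : Afun d = 2 := Afun_big d (by omega)
        have := epsf_le_one u d
        have := wf_nonneg d
        omega

lemma psi_even_bound (u : ℕ) (d : ℤ) (hu : u % 2 = 0)
    (hc : d ≤ 0 → Odd ((u : ℤ) + d)) (hd : d ≠ 1) :
    epsf u d ≤ Afun d + wf d := by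
  have hu' : (u : ℤ) % 2 = 0 := by omega
  rcases lt_trichotomy d 0 with h | h | h
  · rcases eq_or_lt_of_le (show d ≤ -1 by omega) with h1 | h1
    · -- d = -1
      have hA : Afun d = 1 := by unfold Afun; rw [if_pos (by omega)]
      have he : epsf u d = 1 := epsf_eval_odd u d (by omega)
      have := wf_nonneg d
      omega
    · -- d ≤ -2
      have hA : Afun d = 2 := Afun_big d (by omega)
      have := epsf_le_one u d
      have := wf_nonneg d
      omega
  · exfalso
    have := Int.odd_iff.mp (hc (by omega))
    omega
  · rcases eq_or_lt_of_le (show 1 ≤ d by omega) with h1 | h1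
    · omega
    · rcases eq_or_lt_of_le (show 2 ≤ d by omega) with h2 | h2
      · -- d = 2
        have he : epsf u d = -1 := epsf_eval_even u d (by omega)
        have := Afun_nonneg d
        have := wf_nonneg d
        omega
      · rcases eq_or_lt_of_le (show 3 ≤ d by omega) with h3 | h3
        · have hA : Afun d = 1 := by unfold Afun; rw [if_pos (by omega)]
          have := epsf_le_one u d
          have := wf_nonneg d
          omega
        · have hA : Afun d = 2 := Afun_big d (by omega)
          have := epsf_le_one u d
          have := wf_nonneg d
          omega

lemma psi_even_strong (u : ℕ) (d : ℤ) (hu : u % 2 = 0)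
    (hc : d ≤ 0 → Odd ((u : ℤ) + d)) (hdm1 : d ≠ -1) (hd1 : d ≠ 1) (hd3 : d ≠ 3) :
    epsf u d + 1 ≤ Afun d + wf d := by
  have hu' : (u : ℤ) % 2 = 0 := by omega
  rcases lt_trichotomy d 0 with h | h | h
  · have hA : Afun d = 2 := Afun_big d (by omega)
    have := epsf_le_one u d
    have := wf_nonneg d
    omega
  · exfalso
    have := Int.odd_iff.mp (hc (by omega))
    omega
  · rcases eq_or_lt_of_le (show 1 ≤ d by omega) with h1 | h1
    · omega
    · rcases eq_or_lt_of_le (show 2 ≤ d by omega) with h2 | h2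
      · have he : epsf u d = -1 := epsf_eval_even u d (by omega)
        have := Afun_nonneg d
        have := wf_nonneg d
        omega
      · have hA : Afun d = 2 := Afun_big d (by omega)
        have := epsf_le_one u d
        have := wf_nonneg d
        omega


lemma mem_Qset {m : ℕ} {d : ℕ → ℤ} {p : ℕ × ℕ} :
    p ∈ Qset m d ↔ (1 ≤ p.1 ∧ p.1 ≤ m ∧ 1 ≤ p.2 ∧ p.2 ≤ m ∧ p.1 < p.2 ∧ qual (d p.1) (d p.2)) := by
  unfold Qset
  simp only [mem_filter, mem_product, mem_Icc]
  tauto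

lemma Qset_mono {m m' : ℕ} (h : m ≤ m') (d : ℕ → ℤ) : Qset m d ⊆ Qset m' d := by
  intro p hp
  rw [mem_Qset] at *
  refine ⟨hp.1, by omega, hp.2.2.1, by omega, hp.2.2.2.2⟩
  
lemma Qset_card_mono {m m' : ℕ} (h : m ≤ m') (d : ℕ → ℤ) :
    (Qset m d).card ≤ (Qset m' d).card := card_le_card (Qset_mono h d)

lemma Qset_card_add_one {k : ℕ} {d : ℕ → ℤ} {a b : ℕ}
    (ha : 1 ≤ a) (hab : a < b) (hb1 : 2*k < b) (hb2 : b ≤ 2*k+2)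
    (hq : qual (d a) (d b)) :
    (Qset (2*k) d).card + 1 ≤ (Qset (2*k+2) d).card := by
  have hmem : (a, b) ∈ Qset (2*k+2) d := mem_Qset.mpr (by exact ⟨ha, by omega, by omega, by omega, hab, hq⟩)
  have hnot : (a, b) ∉ Qset (2*k) d := by
    rw [mem_Qset]; push_neg; intro _ _ _; omega
  have hsub : insert (a, b) (Qset (2*k) d) ⊆ Qset (2*k+2) d := by
    intro p hp
    rcases Finset.mem_insert.mp hp with h | h
    · exact h ▸ hmem
    · exact Qset_mono (by omega) d h
  calc (Qset (2*k) d).card + 1 = (insert (a,b) (Qset (2*k) d)).card :=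
        (Finset.card_insert_of_notMem hnot).symm
    _ ≤ _ := card_le_card hsub

lemma Qset_card_add_two {k : ℕ} {d : ℕ → ℤ} {a b a' b' : ℕ}
    (ha : 1 ≤ a) (hab : a < b) (hb1 : 2*k < b) (hb2 : b ≤ 2*k+2)
    (hq : qual (d a) (d b))
    (ha' : 1 ≤ a') (hab' : a' < b') (hb1' : 2*k < b') (hb2' : b' ≤ 2*k+2)
    (hq' : qual (d a') (d b'))
    (hne : (a,b) ≠ (a',b')) :
    (Qset (2*k) d).card + 2 ≤ (Qset (2*k+2) d).card := by
  have hmem : (a, b) ∈ Qset (2*k+2) d := mem_Qset.mpr ⟨ha, by omega, by omega, by omega, hab, hq⟩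
  have hmem' : (a', b') ∈ Qset (2*k+2) d := mem_Qset.mpr ⟨ha', by omega, by omega, by omega, hab', hq'⟩
  have hnot : (a, b) ∉ Qset (2*k) d := by rw [mem_Qset]; push_neg; intro _ _ _; omega
  have hnot' : (a', b') ∉ Qset (2*k) d := by rw [mem_Qset]; push_neg; intro _ _ _; omega
  have hnot2 : (a, b) ∉ insert (a', b') (Qset (2*k) d) := by
    rw [Finset.mem_insert]; rintro (h | h); exact hne h; exact hnot h
  have hsub : insert (a,b) (insert (a', b') (Qset (2*k) d)) ⊆ Qset (2*k+2) d := by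
    intro p hp
    rcases Finset.mem_insert.mp hp with h | h
    · exact h ▸ hmem
    · rcases Finset.mem_insert.mp h with h | h
      · exact h ▸ hmem'
      · exact Qset_mono (by omega) d h
  calc (Qset (2*k) d).card + 2
      = (insert (a,b) (insert (a',b') (Qset (2*k) d))).card := by
        rw [Finset.card_insert_of_notMem hnot2, Finset.card_insert_of_notMem hnot']
    _ ≤ _ := card_le_card hsub

lemma Qset_card_one {m : ℕ} {d : ℕ → ℤ} {a b : ℕ}
    (ha : 1 ≤ a) (hab : a < b) (hb : b ≤ m) (hq : qual (d a) (d b)) :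
    1 ≤ (Qset m d).card := by
  have : (a,b) ∈ Qset m d := mem_Qset.mpr ⟨ha, by omega, by omega, hb, hab, hq⟩
  exact Finset.card_pos.mpr ⟨_, this⟩

lemma epsf_pair_zero (n : ℕ) (c : ℤ) : epsf (n+1) c + epsf (n+2) c = 0 := by
  unfold epsf
  by_cases h : Odd (((n+1:ℕ) : ℤ) + c)
  · rw [if_pos h, if_neg]
    · norm_num
    · rw [Int.odd_iff] at *
      push_cast at *
      omega
  · rw [if_neg h, if_pos]
    · norm_num
    · rw [Int.odd_iff] at *
      push_cast at *
      omega

lemma sum_alt (k : ℕ) (c : ℤ) : ∑ u ∈ Finset.Icc 1 (2*k), epsf u c = 0 := by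
  induction k with
  | zero => simp
  | succ n ih =>
    have h1 : 2*(n+1) = (2*n+1) + 1 := by ring
    rw [h1, Finset.sum_Icc_succ_top (by omega), Finset.sum_Icc_succ_top (by omega), ih]
    have := epsf_pair_zero (2*n) c
    have h2 : 2*n+1+1 = 2*n+2 := by ring
    rw [h2]
    omega


lemma AW_eval0 : Afun 0 + wf 0 = 1 := by
  unfold Afun wf
  rw [if_neg (by omega), if_pos (by omega), if_pos ⟨le_refl 0, Even.zero⟩]; norm_num

lemma AW_eval1 : Afun 1 + wf 1 = 0 := by
  unfold Afun wf
  rw [if_neg (by omega), if_pos (by omega), if_neg (by omega)]; norm_num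

lemma AW_eval2 : Afun 2 + wf 2 = 0 := by
  unfold Afun wf
  rw [if_neg (by omega), if_pos (by omega), if_neg (by push_neg; intro h; omega)]; norm_num

lemma AW_eval3 : Afun 3 + wf 3 = 1 := by
  unfold Afun wf
  rw [if_pos (by omega), if_neg (by push_neg; intro h; omega)]; norm_num

lemma lemD (k : ℕ) (d : ℕ → ℤ)
    (hcon : ∀ u, 1 ≤ u → u ≤ 2*k → d u ≤ 0 → Odd ((u : ℤ) + d u)) :
    ∑ u ∈ Finset.Icc 1 (2*k), epsf u (d u)
      ≤ 1 + ∑ u ∈ Finset.Icc 1 (2*k), (Afun (d u) + wf (d u)) + ((Qset (2*k) d).card : ℤ) := by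
  induction k with
  | zero =>
    simp
    positivity
  | succ n ih =>
    -- abbreviations
    set p := 2*n+1 with hp
    set q := 2*n+2 with hq
    have hpodd : p % 2 = 1 := by omega
    have hqeven : q % 2 = 0 := by omega
    have hconp : d p ≤ 0 → Odd ((p : ℤ) + d p) := fun h => hcon p (by omega) (by omega) h
    have hconq : d q ≤ 0 → Odd ((q : ℤ) + d q) := fun h => hcon q (by omega) (by omega) h
    have ih' := ih (fun u h1 h2 h3 => hcon u h1 (by omega) h3)
    have hsplit : ∀ f : ℕ → ℤ, ∑ u ∈ Finset.Icc 1 (2*(n+1)), f u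
        = ∑ u ∈ Finset.Icc 1 (2*n), f u + f p + f q := by
      intro f
      have h1 : 2*(n+1) = (2*n+1) + 1 := by ring
      rw [h1, Finset.sum_Icc_succ_top (by omega), Finset.sum_Icc_succ_top (by omega)]
    rw [hsplit (fun u => epsf u (d u)), hsplit (fun u => Afun (d u) + wf (d u))]
    have hQmono : ((Qset (2*n) d).card : ℤ) ≤ ((Qset (2*(n+1)) d).card : ℤ) := by
      exact_mod_cast Qset_card_mono (by omega) d
    have h2n2 : 2*(n+1) = 2*n+2 := by ring
    -- main case analysis
    by_cases hdq : d q = 1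
    · by_cases hdp : d p = 2
      · -- case ii.a : both bad
        by_cases hex : ∃ x ∈ Finset.Icc 1 (2*n), d x ≠ 1
        · obtain ⟨x, hx, hdx⟩ := hex
          rw [Finset.mem_Icc] at hx
          -- two qualifying pairs : (x, p) or (x, q), plus (p, q)
          have hq1 : qual (d p) (d q) := by unfold qual; omega
          have hq2 : qual (d x) (d p) ∨ qual (d x) (d q) := by unfold qual; omega
          have hQ2 : (Qset (2*n) d).card + 2 ≤ (Qset (2*n+2) d).card := by
            rcases hq2 with h | h
            · exact Qset_card_add_two (a := x) (b := p) (a' := p) (b' := q)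
                (by omega) (by omega) (by omega) (by omega) h
                (by omega) (by omega) (by omega) (by omega) hq1
                (by refine fun hmm => ?_; rw [Prod.mk.injEq] at hmm; omega)
            · exact Qset_card_add_two (a := x) (b := q) (a' := p) (b' := q)
                (by omega) (by omega) (by omega) (by omega) h
                (by omega) (by omega) (by omega) (by omega) hq1
                (by refine fun hmm => ?_; rw [Prod.mk.injEq] at hmm; omega)
          have hep : epsf p (d p) = 1 := by rw [hdp]; exact epsf_eval_odd p 2 (by omega)
          have heq : epsf q (d q) = 1 := by rw [hdq]; exact epsf_eval_odd q 1 (by omega)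
          have hAWp : Afun (d p) + wf (d p) = 0 := by rw [hdp]; exact AW_eval2
          have hAWq : Afun (d q) + wf (d q) = 0 := by rw [hdq]; exact AW_eval1
          have hQB : ((Qset (2*n) d).card : ℤ) + 2 ≤ ((Qset (2*(n+1)) d).card : ℤ) := by
            rw [h2n2]; exact_mod_cast hQ2
          omega
        · -- all prefix = 1 : direct evaluation
          push_neg at hex
          have hsum_eps : ∑ u ∈ Finset.Icc 1 (2*n), epsf u (d u) = 0 := by
            rw [Finset.sum_congr rfl (fun x hx => by rw [hex x hx])]
            exact sum_alt n 1
          have hsum_AW : (0:ℤ) ≤ ∑ u ∈ Finset.Icc 1 (2*n), (Afun (d u) + wf (d u)) :=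
            Finset.sum_nonneg fun u _ => by
              have := Afun_nonneg (d u); have := wf_nonneg (d u); omega
          have hep : epsf p (d p) = 1 := by rw [hdp]; exact epsf_eval_odd p 2 (by omega)
          have heq : epsf q (d q) = 1 := by rw [hdq]; exact epsf_eval_odd q 1 (by omega)
          have hAWp : Afun (d p) + wf (d p) = 0 := by rw [hdp]; exact AW_eval2
          have hAWq : Afun (d q) + wf (d q) = 0 := by rw [hdq]; exact AW_eval1
          have hq1 : qual (d p) (d q) := by unfold qual; omega
          have hQ1 : 1 ≤ (Qset (2*(n+1)) d).card :=
            Qset_card_one (m := 2*(n+1)) (by omega) (by omega) (by omega) hq1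
          have : (1:ℤ) ≤ ((Qset (2*(n+1)) d).card : ℤ) := by exact_mod_cast hQ1
          omega
      · -- dq = 1, dp ≠ 2
        by_cases hdp1 : d p = 1
        · -- spare balances
          have hep : epsf p (d p) = -1 := by rw [hdp1]; exact epsf_eval_even p 1 (by omega)
          have heq : epsf q (d q) = 1 := by rw [hdq]; exact epsf_eval_odd q 1 (by omega)
          have hAWp : Afun (d p) + wf (d p) = 0 := by rw [hdp1]; exact AW_eval1
          have hAWq : Afun (d q) + wf (d q) = 0 := by rw [hdq]; exact AW_eval1
          omega
        · by_cases hdp0 : d p = 0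
          · by_cases hex : ∃ x ∈ Finset.Icc 1 (2*n), d x ≠ 0
            · obtain ⟨x, hx, hdx⟩ := hex
              rw [Finset.mem_Icc] at hx
              have hq2 : qual (d x) (d p) ∨ qual (d x) (d q) := by unfold qual; omega
              have hQ1 : (Qset (2*n) d).card + 1 ≤ (Qset (2*n+2) d).card := by
                rcases hq2 with h | h
                · exact Qset_card_add_one (by omega) (by omega) (by omega) (by omega) h
                · exact Qset_card_add_one (by omega) (by omega) (by omega) (by omega) h
              have hep : epsf p (d p) = 1 := by rw [hdp0]; exact epsf_eval_odd p 0 (by omega)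
              have heq : epsf q (d q) = 1 := by rw [hdq]; exact epsf_eval_odd q 1 (by omega)
              have hAWp : Afun (d p) + wf (d p) = 1 := by rw [hdp0]; exact AW_eval0
              have hAWq : Afun (d q) + wf (d q) = 0 := by rw [hdq]; exact AW_eval1
              have hQB : ((Qset (2*n) d).card : ℤ) + 1 ≤ ((Qset (2*(n+1)) d).card : ℤ) := by
                rw [h2n2]; exact_mod_cast hQ1
              omega
            · -- all prefix = 0 : n = 0 or contradiction
              push_neg at hex
              rcases Nat.eq_zero_or_pos n with hn | hn
              · subst hn
                have hemp : Finset.Icc 1 (2*0) = ∅ := by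
                  apply Finset.Icc_eq_empty; omega
                rw [hemp, Finset.sum_empty, Finset.sum_empty]
                have hep : epsf p (d p) = 1 := by rw [hdp0]; exact epsf_eval_odd p 0 (by omega)
                have heq : epsf q (d q) = 1 := by rw [hdq]; exact epsf_eval_odd q 1 (by omega)
                have hAWp : Afun (d p) + wf (d p) = 1 := by rw [hdp0]; exact AW_eval0
                have hAWq : Afun (d q) + wf (d q) = 0 := by rw [hdq]; exact AW_eval1
                have hQ0 : (0:ℤ) ≤ ((Qset (2*(0+1)) d).card : ℤ) := by positivity
                omega
              · exfalso
                have h2 : d 2 = 0 := hex 2 (Finset.mem_Icc.mpr ⟨by omega, by omega⟩)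
                have := hcon 2 (by omega) (by omega) (by omega)
                rw [Int.odd_iff] at this
                omega
          · -- dp ∉ {0,1,2} : psi_p ≥ 1
            have hstrong := psi_odd_strong p (d p) hpodd hconp hdp0 hdp
            have heq : epsf q (d q) = 1 := by rw [hdq]; exact epsf_eval_odd q 1 (by omega)
            have hAWq : Afun (d q) + wf (d q) = 0 := by rw [hdq]; exact AW_eval1
            omega
    · by_cases hdp : d p = 2
      · -- dp = 2, dq ≠ 1
        by_cases hdqm1 : d q = -1
        · have hq1 : qual (d p) (d q) := by unfold qual; omega
          have hQ1 : (Qset (2*n) d).card + 1 ≤ (Qset (2*n+2) d).card :=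
            Qset_card_add_one (by omega) (by omega) (by omega) (by omega) hq1
          have hep : epsf p (d p) = 1 := by rw [hdp]; exact epsf_eval_odd p 2 (by omega)
          have heq : epsf q (d q) = 1 := by rw [hdqm1]; exact epsf_eval_odd q (-1) (by omega)
          have hAWp : Afun (d p) + wf (d p) = 0 := by rw [hdp]; exact AW_eval2
          have hAWq : Afun (d q) + wf (d q) = 1 := by
            rw [hdqm1]
            unfold Afun wf
            rw [if_pos (by omega), if_neg (by push_neg; intro h; rw [Int.even_iff]; omega)]
            norm_num
          have hQB : ((Qset (2*n) d).card : ℤ) + 1 ≤ ((Qset (2*(n+1)) d).card : ℤ) := by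
            rw [h2n2]; exact_mod_cast hQ1
          omega
        · by_cases hdq3 : d q = 3
          · by_cases hex : ∃ x ∈ Finset.Icc 1 (2*n), d x ≠ 2
            · obtain ⟨x, hx, hdx⟩ := hex
              rw [Finset.mem_Icc] at hx
              have hq2 : qual (d x) (d p) ∨ qual (d x) (d q) := by unfold qual; omega
              have hQ1 : (Qset (2*n) d).card + 1 ≤ (Qset (2*n+2) d).card := by
                rcases hq2 with h | h
                · exact Qset_card_add_one (by omega) (by omega) (by omega) (by omega) h
                · exact Qset_card_add_one (by omega) (by omega) (by omega) (by omega) h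
              have hep : epsf p (d p) = 1 := by rw [hdp]; exact epsf_eval_odd p 2 (by omega)
              have heq : epsf q (d q) = 1 := by rw [hdq3]; exact epsf_eval_odd q 3 (by omega)
              have hAWp : Afun (d p) + wf (d p) = 0 := by rw [hdp]; exact AW_eval2
              have hAWq : Afun (d q) + wf (d q) = 1 := by rw [hdq3]; exact AW_eval3
              have hQB : ((Qset (2*n) d).card : ℤ) + 1 ≤ ((Qset (2*(n+1)) d).card : ℤ) := by
                rw [h2n2]; exact_mod_cast hQ1
              omega
            · -- all prefix = 2 : direct evaluation
              push_neg at hex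
              have hsum_eps : ∑ u ∈ Finset.Icc 1 (2*n), epsf u (d u) = 0 := by
                rw [Finset.sum_congr rfl (fun x hx => by rw [hex x hx])]
                exact sum_alt n 2
              have hsum_AW : (0:ℤ) ≤ ∑ u ∈ Finset.Icc 1 (2*n), (Afun (d u) + wf (d u)) :=
                Finset.sum_nonneg fun u _ => by
                  have := Afun_nonneg (d u); have := wf_nonneg (d u); omega
              have hep : epsf p (d p) = 1 := by rw [hdp]; exact epsf_eval_odd p 2 (by omega)
              have heq : epsf q (d q) = 1 := by rw [hdq3]; exact epsf_eval_odd q 3 (by omega)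
              have hAWp : Afun (d p) + wf (d p) = 0 := by rw [hdp]; exact AW_eval2
              have hAWq : Afun (d q) + wf (d q) = 1 := by rw [hdq3]; exact AW_eval3
              have hQ0 : (0:ℤ) ≤ ((Qset (2*(n+1)) d).card : ℤ) := by positivity
              omega
          · -- dq ∉ {-1, 1, 3} : psi_q ≥ 1
            have hstrong := psi_even_strong q (d q) hqeven hconq hdqm1 hdq hdq3
            have hep : epsf p (d p) = 1 := by rw [hdp]; exact epsf_eval_odd p 2 (by omega)
            have hAWp : Afun (d p) + wf (d p) = 0 := by rw [hdp]; exact AW_eval2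
            omega
      · -- dp ≠ 2, dq ≠ 1 : both psi ≥ 0
        have hb1 := psi_odd_bound p (d p) hpodd hconp hdp
        have hb2 := psi_even_bound q (d q) hqeven hconq hdq
        omega


lemma sum_eps (t : Finset ℕ) (D : ℕ → ℤ) :
    ∑ u ∈ t, epsf u (D u)
      = ((t.filter fun u : ℕ => Odd ((u:ℤ) + D u)).card : ℤ)
        - ((t.filter fun u : ℕ => ¬ Odd ((u:ℤ) + D u)).card : ℤ) := by
  classical
  induction t using Finset.induction_on with
  | empty => simp
  | insert c t2 ha ih =>
    rw [Finset.sum_insert ha, Finset.filter_insert, Finset.filter_insert]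
    by_cases h : Odd ((c:ℤ) + D c)
    · rw [if_pos h, if_neg (by exact fun hc => hc h)]
      rw [Finset.card_insert_of_notMem (fun hc => ha (Finset.mem_of_mem_filter c hc))]
      have heps : epsf c (D c) = 1 := by unfold epsf; rw [if_pos h]
      rw [heps, ih]
      push_cast
      ring
    · rw [if_neg h, if_pos h]
      rw [Finset.card_insert_of_notMem (fun hc => ha (Finset.mem_of_mem_filter c hc))]
      have heps : epsf c (D c) = -1 := by unfold epsf; rw [if_neg h]
      rw [heps, ih]
      push_cast
      ring

lemma sum_w (t : Finset ℕ) (D : ℕ → ℤ) :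
    ∑ u ∈ t, wf (D u)
      = ((t.filter fun u => D u ≤ 0 ∧ Even (D u)).card : ℤ) := by
  classical
  induction t using Finset.induction_on with
  | empty => simp
  | insert c t2 ha ih =>
    rw [Finset.sum_insert ha, Finset.filter_insert]
    by_cases h : D c ≤ 0 ∧ Even (D c)
    · rw [if_pos h]
      rw [Finset.card_insert_of_notMem (fun hc => ha (Finset.mem_of_mem_filter c hc))]
      have hw : wf (D c) = 1 := by unfold wf; rw [if_pos h]
      rw [hw, ih]
      push_cast
      ring
    · rw [if_neg h]
      have hw : wf (D c) = 0 := by unfold wf; rw [if_neg h]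
      rw [hw, ih]
      ring

end UPB

section MainProof
open Finset UPB

set_option maxHeartbeats 1000000 in
/-- Let `e > 1` be odd, `S` an `e`-core β-set of rank `n` with
`X' = {x ∈ S : x + e ∉ S}` of size exactly `e`; let `Y`, `Z` be the even and odd
elements of `X'`, with `a = |Y|`, `b = |Z|`, `b > a ≥ 1` and `c = b − a`. If `x_α` is the
largest element of `Y` and `λ(x_α) = x_α − #{x ∈ S : x < x_α}`, then
`n − λ(x_α) + #{x ∈ S : x odd, 0 < x − x_α < e} ≥ c`. -/
theorem unitary_perversity_lower_bound (e : ℕ) (he : 1 < e) (hodd : Odd e)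
    (S : Finset ℕ) (hS : IsCore e S)
    (hX' : (S.filter fun x => x + e ∉ S).card = e)
    (a b : ℕ)
    (ha : a = ((S.filter fun x => x + e ∉ S).filter fun x => x % 2 = 0).card)
    (hb : b = ((S.filter fun x => x + e ∉ S).filter fun x => x % 2 = 1).card)
    (ha1 : 1 ≤ a) (hab : a < b)
    (hY : ((S.filter fun x => x + e ∉ S).filter fun x => x % 2 = 0).Nonempty)
    (xa : ℕ)
    (hxa : xa = ((S.filter fun x => x + e ∉ S).filter fun x => x % 2 = 0).max' hY) :
    (b : ℤ) - (a : ℤ) ≤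
      (brank S : ℤ) - ((xa : ℤ) - ((S.filter (· < xa)).card : ℤ))
        + ((S.filter fun x => x % 2 = 1 ∧ xa < x ∧ x < xa + e).card : ℤ) := by
  classical
  have he0 : 0 < e := by omega
  -- basic facts about xa
  have hxaY : xa ∈ (S.filter fun x => x + e ∉ S).filter fun x => x % 2 = 0 := by
    rw [hxa]; exact Finset.max'_mem _ hY
  have hxaS : xa ∈ S := (Finset.mem_filter.mp (Finset.mem_filter.mp hxaY).1).1
  have hxaX : xa + e ∉ S := (Finset.mem_filter.mp (Finset.mem_filter.mp hxaY).1).2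
  have hxa2 : xa % 2 = 0 := (Finset.mem_filter.mp hxaY).2
  have hxamax : ∀ y ∈ S, y + e ∉ S → y % 2 = 0 → y ≤ xa := by
    intro y hy1 hy2 hy3
    rw [hxa]
    apply Finset.le_max'
    simp only [Finset.mem_filter]
    exact ⟨⟨hy1, hy2⟩, hy3⟩
  -- residue injectivity on X'
  have hstep : ∀ x ∈ S, ∀ x', x' ∈ S → x + e ∉ S → x % e = x' % e → x < x' → False := by
    intro x hx x' hx' hxe hmod hlt
    have hdvd : e ∣ x' - x := (Nat.modEq_iff_dvd' hlt.le).mp hmod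
    obtain ⟨j, hj⟩ := hdvd
    have hj1 : 1 ≤ j := by
      rcases Nat.eq_zero_or_pos j with h | h
      · exfalso
        rw [h, Nat.mul_zero] at hj
        omega
      · exact h
    have hle : x + e ≤ x' := by
      have h2 : e * 1 ≤ e * j := Nat.mul_le_mul_left e hj1
      rw [Nat.mul_one] at h2
      omega
    have hmod2 : (x + e) % e = x' % e := by
      rw [Nat.add_mod_right]
      exact hmod
    exact hxe (core_down hS x' hx' (x+e) hmod2 hle)
  have hinj : ∀ x, x ∈ S → x + e ∉ S → ∀ x', x' ∈ S → x' + e ∉ S → x % e = x' % e → x = x' := by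
    intro x hx hxe x' hx' hxe' hmod
    rcases lt_trichotomy x x' with h | h | h
    · exact absurd (hstep x hx x' hx' hxe hmod h) (fun f => f)
    · exact h
    · exact absurd (hstep x' hx' x hx hxe' hmod.symm h) (fun f => f)
  -- surjectivity of residues
  have hinjOn : Set.InjOn (· % e) (S.filter fun x => x + e ∉ S) := by
    intro x hx y hy hmod
    simp only [Finset.coe_filter, Set.mem_setOf_eq] at hx hy
    exact hinj x hx.1 hx.2 y hy.1 hy.2 hmod
  have himage : (S.filter fun x => x + e ∉ S).image (· % e) = Finset.range e := by
    apply Finset.eq_of_subset_of_card_le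
    · intro r hr
      obtain ⟨x, _, rfl⟩ := Finset.mem_image.mp hr
      exact Finset.mem_range.mpr (Nat.mod_lt x he0)
    · rw [Finset.card_range, Finset.card_image_of_injOn hinjOn, hX']
  have hsurj : ∀ r, ∃ x, r < e → (x ∈ S ∧ x + e ∉ S) ∧ x % e = r := by
    intro r
    by_cases hr : r < e
    · have : r ∈ (S.filter fun x => x + e ∉ S).image (· % e) := by
        rw [himage]; exact Finset.mem_range.mpr hr
      obtain ⟨x, hx, hx2⟩ := Finset.mem_image.mp this
      exact ⟨x, fun _ => ⟨Finset.mem_filter.mp hx, hx2⟩⟩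
    · exact ⟨0, fun h => absurd h hr⟩
  choose TF hTF using hsurj
  have hTFS : ∀ r, r < e → TF r ∈ S := fun r hr => ((hTF r hr).1).1
  have hTFX : ∀ r, r < e → TF r + e ∉ S := fun r hr => ((hTF r hr).1).2
  have hTFmod : ∀ r, r < e → TF r % e = r := fun r hr => (hTF r hr).2
  -- membership criterion
  have hmem : ∀ x, x ∈ S ↔ x ≤ TF (x % e) := by
    intro x
    have hr : x % e < e := Nat.mod_lt x he0
    constructor
    · intro hx
      by_contra hgt
      push_neg at hgt
      exact hstep (TF (x % e)) (hTFS _ hr) x hx (hTFX _ hr) (hTFmod _ hr) hgt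
    · intro hle
      exact core_down hS (TF (x % e)) (hTFS _ hr) x (by rw [hTFmod _ hr]) hle
  have hTFxa : TF (xa % e) = xa := by
    have hr : xa % e < e := Nat.mod_lt xa he0
    exact hinj (TF (xa % e)) (hTFS _ hr) (hTFX _ hr) xa hxaS hxaX (by rw [hTFmod _ hr])
  -- tops indexed by window offset
  set TT : ℕ → ℕ := fun u => TF ((xa + u) % e) with hTTdef
  have hTTmem : ∀ u, u < e → TT u ∈ S ∧ TT u + e ∉ S ∧ TT u % e = (xa + u) % e := by
    intro u hu
    have hr : (xa + u) % e < e := Nat.mod_lt _ he0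
    exact ⟨hTFS _ hr, hTFX _ hr, hTFmod _ hr⟩
  have hTT0 : TT 0 = xa := by
    simp only [hTTdef, Nat.add_zero]
    exact hTFxa
  -- the integers D u
  set D : ℕ → ℤ := fun u => ((xa : ℤ) + u - TT u) / e with hDdef
  have hDdvd : ∀ u, u < e → (e : ℤ) ∣ ((xa : ℤ) + u - TT u) := by
    intro u hu
    have h1 : (xa + u) % e = TT u % e := ((hTTmem u hu).2.2).symm
    have h2 : ((xa + u : ℕ) : ℤ) % (e : ℤ) = ((TT u : ℕ) : ℤ) % (e : ℤ) := by
      exact_mod_cast congrArg (fun n : ℕ => (n : ℤ)) h1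
    have h3 : (e:ℤ) ∣ ((TT u : ℤ) - ((xa + u : ℕ) : ℤ)) :=
      Int.ModEq.dvd (show Int.ModEq (e:ℤ) ((xa + u : ℕ) : ℤ) ((TT u : ℕ) : ℤ) from h2)
    have h4 : ((xa + u : ℕ) : ℤ) = (xa : ℤ) + u := by push_cast; ring
    rw [h4] at h3
    obtain ⟨c, hc⟩ := h3
    exact ⟨-c, by rw [mul_neg, ← hc]; ring⟩
  have hDspec : ∀ u, u < e → (TT u : ℤ) = (xa : ℤ) + u - e * D u := by
    intro u hu
    simp only [hDdef]
    rw [Int.mul_ediv_cancel' (hDdvd u hu)]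
    ring
  have hD0 : D 0 = 0 := by
    simp only [hDdef, hTT0]
    norm_num
  -- parity
  obtain ⟨f, hf⟩ : ∃ f : ℤ, (e : ℤ) = 2 * f + 1 := by
    obtain ⟨m, hm⟩ := hodd
    exact ⟨(m : ℤ), by rw [hm]; push_cast; ring⟩
  have hpar : ∀ u, u < e → (TT u : ℤ) % 2 = ((u : ℤ) + D u) % 2 := by
    intro u hu
    have hz : (TT u : ℤ) = (xa : ℤ) + u - (2 * (f * D u) + D u) := by
      rw [hDspec u hu, hf]; ring
    have hxa2' : (xa : ℤ) % 2 = 0 := by omega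
    omega
  -- the constraint
  have hcon : ∀ u, 1 ≤ u → u ≤ e - 1 → D u ≤ 0 → Odd ((u : ℤ) + D u) := by
    intro u h1 h2 h3
    have hu : u < e := by omega
    have hTTbig : (xa : ℤ) + u ≤ (TT u : ℤ) := by
      have h4 := hDspec u hu
      have h5 : (e:ℤ) * D u ≤ 0 := mul_nonpos_of_nonneg_of_nonpos (by positivity) h3
      omega
    have hTTgt : xa < TT u := by
      have : (xa:ℤ) < (TT u : ℤ) := by omega
      exact_mod_cast this
    have hTTodd : TT u % 2 = 1 := by
      rcases Nat.mod_two_eq_zero_or_one (TT u) with h | h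
      · exfalso
        have := hxamax (TT u) (hTTmem u hu).1 (hTTmem u hu).2.1 h
        omega
      · exact h
    have : (TT u : ℤ) % 2 = 1 := by omega
    rw [Int.odd_iff]
    rw [hpar u hu] at this
    exact this
  -- residue distinctness
  have hne0 : ∀ u, 1 ≤ u → u < e → (xa + u) % e ≠ xa % e := by
    intro u h1 h2 hcontra
    have : (xa + u) ≡ xa + 0 [MOD e] := by
      unfold Nat.ModEq
      rw [Nat.add_zero]
      exact hcontra
    have h3 : u ≡ 0 [MOD e] := Nat.ModEq.add_left_cancel' xa this
    unfold Nat.ModEq at h3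
    rw [Nat.zero_mod, Nat.mod_eq_of_lt h2] at h3
    omega
  have hshiftinj : ∀ u v, u < e → v < e → (xa + u) % e = (xa + v) % e → u = v := by
    intro u v hu hv hmod
    have : u ≡ v [MOD e] := Nat.ModEq.add_left_cancel' xa hmod
    unfold Nat.ModEq at this
    rw [Nat.mod_eq_of_lt hu, Nat.mod_eq_of_lt hv] at this
    exact this
  have hTTinj : ∀ u v, u < e → v < e → TT u = TT v → u = v := by
    intro u v hu hv heq
    apply hshiftinj u v hu hv
    rw [← (hTTmem u hu).2.2, ← (hTTmem v hv).2.2, heq]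
  have hTTne : ∀ u, 1 ≤ u → u < e → TT u ≠ xa := by
    intro u h1 h2 hcontra
    apply hne0 u h1 h2
    rw [← (hTTmem u h2).2.2, hcontra]
  -- X' as image of TT
  have hX'image : (S.filter fun x => x + e ∉ S) = (Finset.range e).image TT := by
    apply Finset.Subset.antisymm
    · intro x hx
      have hxS := (Finset.mem_filter.mp hx).1
      have hxe := (Finset.mem_filter.mp hx).2
      have hr : x % e < e := Nat.mod_lt x he0
      -- find u with (xa + u) % e = x % e
      have hshiftim : (Finset.range e).image (fun u => (xa + u) % e) = Finset.range e := by
        apply Finset.eq_of_subset_of_card_le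
        · intro r hr'
          obtain ⟨y, _, rfl⟩ := Finset.mem_image.mp hr'
          exact Finset.mem_range.mpr (Nat.mod_lt _ he0)
        · rw [Finset.card_range, Finset.card_image_of_injOn, Finset.card_range]
          intro u hu v hv h
          simp only [Finset.coe_range, Set.mem_Iio] at hu hv
          exact hshiftinj u v hu hv h
      have : x % e ∈ (Finset.range e).image (fun u => (xa + u) % e) := by
        rw [hshiftim]; exact Finset.mem_range.mpr hr
      obtain ⟨u, hu, humod⟩ := Finset.mem_image.mp this
      refine Finset.mem_image.mpr ⟨u, hu, ?_⟩
      have hue : u < e := Finset.mem_range.mp hu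
      exact hinj (TT u) (hTTmem u hue).1 (hTTmem u hue).2.1 x hxS hxe
        (by rw [(hTTmem u hue).2.2, humod])
    · intro x hx
      obtain ⟨u, hu, rfl⟩ := Finset.mem_image.mp hx
      have hue : u < e := Finset.mem_range.mp hu
      exact Finset.mem_filter.mpr ⟨(hTTmem u hue).1, (hTTmem u hue).2.1⟩

  -- ===== counting b and a =====
  have hrange : Finset.range e = insert 0 (Finset.Icc 1 (e-1)) := by
    ext x
    simp only [Finset.mem_range, Finset.mem_insert, Finset.mem_Icc]
    omega
  have hparity_iff : ∀ u, u ∈ Finset.Icc 1 (e-1) →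
      ((TT u % 2 = 1) ↔ Odd ((u:ℤ) + D u)) := by
    intro u hu
    rw [Finset.mem_Icc] at hu
    have hue : u < e := by omega
    have h1 := hpar u hue
    rw [Int.odd_iff]
    constructor
    · intro h; omega
    · intro h; omega
  have hTTinj2 : Set.InjOn TT ((Finset.range e) : Set ℕ) := by
    intro x hx y hy hxy
    simp only [Finset.coe_range, Set.mem_Iio] at hx hy
    exact hTTinj x y hx hy hxy
  have hbN : b = ((Finset.Icc 1 (e-1)).filter fun u : ℕ => Odd ((u:ℤ) + D u)).card := by
    have h1 : ((Finset.range e).filter fun u => TT u % 2 = 1)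
        = (Finset.Icc 1 (e-1)).filter fun u : ℕ => Odd ((u:ℤ) + D u) := by
      rw [hrange, Finset.filter_insert, if_neg (by rw [hTT0]; omega)]
      apply Finset.filter_congr
      intro u hu
      exact hparity_iff u hu
    rw [hb, hX'image, Finset.filter_image, Finset.card_image_of_injOn
      (Set.InjOn.mono (by intro x hx; exact Finset.mem_coe.mpr (Finset.mem_of_mem_filter x (Finset.mem_coe.mp hx))) hTTinj2), h1]
  have haN : a = ((Finset.Icc 1 (e-1)).filter fun u : ℕ => ¬ Odd ((u:ℤ) + D u)).card + 1 := by
    have h1 : ((Finset.range e).filter fun u => TT u % 2 = 0)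
        = insert 0 ((Finset.Icc 1 (e-1)).filter fun u : ℕ => ¬ Odd ((u:ℤ) + D u)) := by
      rw [hrange, Finset.filter_insert, if_pos (by rw [hTT0]; omega)]
      congr 1
      apply Finset.filter_congr
      intro u hu
      constructor
      · intro h h2
        rw [← hparity_iff u hu] at h2
        omega
      · intro h
        have h3 := Nat.mod_two_eq_zero_or_one (TT u)
        rcases h3 with h3 | h3
        · exact h3
        · exact absurd ((hparity_iff u hu).mp h3) h
    rw [ha, hX'image, Finset.filter_image, Finset.card_image_of_injOn
      (Set.InjOn.mono (by intro x hx; exact Finset.mem_coe.mpr (Finset.mem_of_mem_filter x (Finset.mem_coe.mp hx))) hTTinj2), h1,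
      Finset.card_insert_of_notMem]
    intro hcontra
    have := Finset.mem_of_mem_filter 0 hcontra
    rw [Finset.mem_Icc] at this
    omega
  have hba : (b : ℤ) - (a : ℤ) = (∑ u ∈ Finset.Icc 1 (e-1), epsf u (D u)) - 1 := by
    rw [sum_eps, hbN, haN]
    push_cast
    ring
  -- ===== counting w =====
  have hwcount : ((S.filter fun x => x % 2 = 1 ∧ xa < x ∧ x < xa + e).card : ℤ)
      = ∑ u ∈ Finset.Icc 1 (e-1), wf (D u) := by
    rw [sum_w]
    congr 1
    apply Finset.card_bij' (fun x _ => x - xa) (fun u _ => xa + u)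
    · intro x hx
      simp only [Finset.mem_filter] at hx
      obtain ⟨hxS, hodd2, hlt, hlt2⟩ := hx
      have hu1 : 1 ≤ x - xa := by omega
      have hu2 : x - xa ≤ e - 1 := by omega
      set u := x - xa with hudef
      have hxu : x = xa + u := by omega
      have hue : u < e := by omega
      have hxle : x ≤ TT u := by
        have := (hmem x).mp hxS
        rw [hxu] at this ⊢
        exact this
      have hDle : D u ≤ 0 := by
        by_contra hpos
        push_neg at hpos
        have h5 : (0:ℤ) < (e:ℤ) * D u := by
          apply mul_pos
          · exact_mod_cast he0
          · exact hpos
        have h6 := hDspec u hue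
        have h7 : ((x:ℕ) : ℤ) ≤ ((TT u : ℕ) : ℤ) := by exact_mod_cast hxle
        rw [hxu] at h7
        push_cast at h7
        omega
      have huodd : u % 2 = 1 := by omega
      have hOddu := hcon u hu1 hu2 hDle
      rw [Int.odd_iff] at hOddu
      have huZ : (u:ℤ) % 2 = 1 := by omega
      refine Finset.mem_filter.mpr ⟨Finset.mem_Icc.mpr ⟨hu1, hu2⟩, hDle, ?_⟩
      rw [Int.even_iff]
      omega
    · intro u hu
      simp only [Finset.mem_filter, Finset.mem_Icc] at hu
      obtain ⟨⟨hu1, hu2⟩, hDle, hDeven⟩ := hu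
      have hue : u < e := by omega
      have hxS : xa + u ∈ S := by
        rw [hmem]
        have h6 := hDspec u hue
        have h5 : (e:ℤ) * D u ≤ 0 := mul_nonpos_of_nonneg_of_nonpos (by positivity) hDle
        have : ((xa + u : ℕ) : ℤ) ≤ ((TT u : ℕ) : ℤ) := by push_cast; omega
        exact_mod_cast this
      have hOddu := hcon u hu1 hu2 hDle
      rw [Int.odd_iff] at hOddu
      rw [Int.even_iff] at hDeven
      have huZ : (u:ℤ) % 2 = 1 := by omega
      have huodd : u % 2 = 1 := by omega
      refine Finset.mem_filter.mpr ⟨hxS, by omega, by omega, by omega⟩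
    · intro x hx
      simp only [Finset.mem_filter] at hx
      omega
    · intro u hu
      omega
  -- ===== rank identity =====
  have hbelow := below_add_gapc S xa
  have hcardP := card_Pfin S xa hxaS
  -- ===== witness bound =====
  have hPbound : (∑ u ∈ Finset.Icc 1 (e-1), Afun (D u)) + ((Qset (e-1) D).card : ℤ)
      ≤ ((Pfin S xa).card : ℤ) := by
    -- helpers
    have hTTeq : ∀ u : ℕ, TT u = TF ((xa + u) % e) := fun u => rfl
    have hnotinS : ∀ y : ℕ, TF (y % e) < y → y ∉ S := by
      intro y hy hyS
      have := (hmem y).mp hyS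
      omega
    have hxa2eNot : xa + 2*e ∉ S := by
      apply hnotinS
      have hmod2 : (xa + 2*e) % e = xa % e := by
        have h9 : xa + 2*e = xa + e + e := by ring
        rw [h9, Nat.add_mod_right, Nat.add_mod_right]
      rw [hmod2, hTFxa]
      omega
    have hTT2eNot : ∀ u, u < e → TT u + 2*e ∉ S := by
      intro u hu
      apply hnotinS
      have hmod2 : (TT u + 2*e) % e = (xa + u) % e := by
        have h9 : TT u + 2*e = TT u + e + e := by ring
        rw [h9, Nat.add_mod_right, Nat.add_mod_right]
        exact (hTTmem u hu).2.2
      rw [hmod2, ← hTTeq u]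
      omega
    have hxaemod : e ≤ xa → (xa - e) % e = xa % e := by
      intro hle
      conv_rhs => rw [show xa = (xa - e) + e by omega]
      rw [Nat.add_mod_right]
    have hxaeS : e ≤ xa → xa - e ∈ S := by
      intro hle
      rw [hmem, hxaemod hle, hTFxa]
      omega
    -- the family
    set Fam : ℕ → Finset (ℕ × ℕ) := fun u =>
      if D u = -1 then {(xa + e, TT u)}
      else if D u ≤ -2 then {(xa + e, TT u), (xa + 2*e, TT u)}
      else if D u = 3 then {(TT u + e, xa - e)}
      else if 4 ≤ D u then {(TT u + e, xa - e), (TT u + 2*e, xa - e)}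
      else (∅ : Finset (ℕ × ℕ)) with hFamdef
    have hFamAll : ∀ u ∈ Finset.Icc 1 (e-1),
        (Fam u ⊆ Pfin S xa) ∧ ((Fam u).card : ℤ) = Afun (D u) ∧
        (∀ z ∈ Fam u, (z.1 % e = xa % e ∧ z.2 % e = (xa+u) % e)
          ∨ (z.1 % e = (xa+u) % e ∧ z.2 % e = xa % e)) := by
      intro u hu
      rw [Finset.mem_Icc] at hu
      have hue : u < e := by omega
      have hspec := hDspec u hue
      have hTTS := (hTTmem u hue).1
      have hTTX := (hTTmem u hue).2.1
      have hTTmod := (hTTmem u hue).2.2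
      have hTTnexa := hTTne u (by omega) hue
      have hxaemod2 : (xa + e) % e = xa % e := Nat.add_mod_right xa e
      have hxa2emod : (xa + 2*e) % e = xa % e := by
        have h9 : xa + 2*e = xa + e + e := by ring
        rw [h9, Nat.add_mod_right, Nat.add_mod_right]
      have hTTemod : (TT u + e) % e = (xa + u) % e := by
        rw [Nat.add_mod_right]; exact hTTmod
      have hTT2emod : (TT u + 2*e) % e = (xa + u) % e := by
        have h9 : TT u + 2*e = TT u + e + e := by ring
        rw [h9, Nat.add_mod_right, Nat.add_mod_right]; exact hTTmod
      rcases lt_trichotomy (D u) 0 with hD | hD | hD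
      · -- D u ≤ -1 : tops above
        have hbig : ∀ m : ℤ, D u ≤ -m → (xa : ℤ) + m * e < (TT u : ℤ) := by
          intro m hm
          have h5 : (e:ℤ) * D u ≤ (e:ℤ) * (-m) := by
            apply mul_le_mul_of_nonneg_left hm (by positivity)
          have h6 : (e:ℤ) * (-m) = -(m * e) := by ring
          omega
        rcases eq_or_lt_of_le (show D u ≤ -1 by omega) with h1 | h1
        · -- D u = -1
          have hFam1 : Fam u = {(xa + e, TT u)} := by
            rw [hFamdef]; simp only [h1]; norm_num
          have hlt : xa + e < TT u := by
            have := hbig 1 (by omega)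
            push_cast at this ⊢
            omega
          refine ⟨?_, ?_, ?_⟩
          · rw [hFam1]
            intro z hz
            rw [Finset.mem_singleton] at hz
            rw [mem_Pfin, hz]
            exact ⟨hTTS, hTTnexa, hlt, hxaX⟩
          · rw [hFam1, Finset.card_singleton, h1]
            unfold Afun
            rw [if_pos (Or.inl rfl)]
            norm_num
          · rw [hFam1]
            intro z hz
            rw [Finset.mem_singleton] at hz
            rw [hz]
            exact Or.inl ⟨hxaemod2, hTTmod⟩
        · -- D u ≤ -2
          have hD2 : D u ≤ -2 := by omega
          have hne9 : (xa + e, TT u) ≠ (xa + 2*e, TT u) := by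
            intro hcontra
            have := congrArg Prod.fst hcontra
            simp only at this
            omega
          have hFam1 : Fam u = {(xa + e, TT u), (xa + 2*e, TT u)} := by
            rw [hFamdef]; simp only
            rw [if_neg (by omega), if_pos hD2]
          have hlt : xa + 2*e < TT u := by
            have := hbig 2 (by omega)
            push_cast at this ⊢
            omega
          refine ⟨?_, ?_, ?_⟩
          · rw [hFam1]
            intro z hz
            rw [Finset.mem_insert, Finset.mem_singleton] at hz
            rcases hz with hz | hz <;> rw [mem_Pfin, hz]
            · exact ⟨hTTS, hTTnexa, by omega, hxaX⟩
            · exact ⟨hTTS, hTTnexa, hlt, hxa2eNot⟩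
          · rw [hFam1, Finset.card_insert_of_notMem (by rw [Finset.mem_singleton]; exact hne9),
              Finset.card_singleton, Afun_big (D u) (Or.inl hD2)]
            norm_num
          · rw [hFam1]
            intro z hz
            rw [Finset.mem_insert, Finset.mem_singleton] at hz
            rcases hz with hz | hz <;> rw [hz]
            · exact Or.inl ⟨hxaemod2, hTTmod⟩
            · exact Or.inl ⟨hxa2emod, hTTmod⟩
      · -- D u = 0 : empty
        have hFam1 : Fam u = ∅ := by
          rw [hFamdef]; simp only
          rw [if_neg (by omega), if_neg (by omega), if_neg (by omega), if_neg (by omega)]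
        have hAfun : Afun (D u) = 0 := by
          unfold Afun
          rw [if_neg (by omega), if_pos (by omega)]
        rw [hFam1, hAfun]
        refine ⟨Finset.empty_subset _, by norm_num, fun z hz => absurd hz (Finset.notMem_empty z)⟩
      · -- D u ≥ 1
        have hTTpos : (0:ℤ) ≤ (TT u : ℤ) := by positivity
        have hsmall : ∀ m : ℤ, m ≤ D u → (TT u : ℤ) ≤ (xa:ℤ) + u - m * e := by
          intro m hm
          have h5 : (e:ℤ) * m ≤ (e:ℤ) * D u := by
            apply mul_le_mul_of_nonneg_left hm (by positivity)
          have h6 : (e:ℤ) * m = m * e := by ring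
          omega
        rcases lt_trichotomy (D u) 3 with h3 | h3 | h3
        · -- D u ∈ {1, 2} : empty
          have hFam1 : Fam u = ∅ := by
            rw [hFamdef]; simp only
            rw [if_neg (by omega), if_neg (by omega), if_neg (by omega), if_neg (by omega)]
          have hAfun : Afun (D u) = 0 := by
            unfold Afun
            rw [if_neg (by omega), if_pos (by omega)]
          rw [hFam1, hAfun]
          refine ⟨Finset.empty_subset _, by norm_num, fun z hz => absurd hz (Finset.notMem_empty z)⟩
        · -- D u = 3
          have hxabig : 2*e + 1 ≤ xa := by
            have := hsmall 3 (by omega)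
            have h7 : (u:ℤ) < (e:ℤ) := by exact_mod_cast hue
            push_cast at this ⊢
            omega
          have hexa : e ≤ xa := by omega
          have hcast : ((xa - e : ℕ) : ℤ) = (xa : ℤ) - e := by
            push_cast [hexa]
            ring
          have hlt : TT u + e < xa - e := by
            have h8 := hsmall 3 (by omega)
            have h9 : ((TT u + e : ℕ) : ℤ) < ((xa - e : ℕ) : ℤ) := by
              rw [hcast]
              push_cast
              omega
            exact_mod_cast h9
          have hFam1 : Fam u = {(TT u + e, xa - e)} := by
            rw [hFamdef]; simp only
            rw [if_neg (by omega), if_neg (by omega), if_pos h3]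
          refine ⟨?_, ?_, ?_⟩
          · rw [hFam1]
            intro z hz
            rw [Finset.mem_singleton] at hz
            rw [mem_Pfin, hz]
            exact ⟨hxaeS hexa, by omega, hlt, hTTX⟩
          · rw [hFam1, Finset.card_singleton, h3]
            unfold Afun
            rw [if_pos (Or.inr rfl)]
            norm_num
          · rw [hFam1]
            intro z hz
            rw [Finset.mem_singleton] at hz
            rw [hz]
            exact Or.inr ⟨hTTemod, hxaemod hexa⟩
        · -- D u ≥ 4
          have hD4 : 4 ≤ D u := by omega
          have hxabig : 3*e + 1 ≤ xa := by
            have := hsmall 4 (by omega)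
            have h7 : (u:ℤ) < (e:ℤ) := by exact_mod_cast hue
            push_cast at this ⊢
            omega
          have hexa : e ≤ xa := by omega
          have hcast : ((xa - e : ℕ) : ℤ) = (xa : ℤ) - e := by
            push_cast [hexa]
            ring
          have hlt : TT u + 2*e < xa - e := by
            have h8 := hsmall 4 (by omega)
            have h9 : ((TT u + 2*e : ℕ) : ℤ) < ((xa - e : ℕ) : ℤ) := by
              rw [hcast]
              push_cast
              omega
            exact_mod_cast h9
          have hne9 : (TT u + e, xa - e) ≠ (TT u + 2*e, xa - e) := by
            intro hcontra
            have := congrArg Prod.fst hcontra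
            simp only at this
            omega
          have hFam1 : Fam u = {(TT u + e, xa - e), (TT u + 2*e, xa - e)} := by
            rw [hFamdef]; simp only
            rw [if_neg (by omega), if_neg (by omega), if_neg (by omega), if_pos hD4]
          refine ⟨?_, ?_, ?_⟩
          · rw [hFam1]
            intro z hz
            rw [Finset.mem_insert, Finset.mem_singleton] at hz
            rcases hz with hz | hz <;> rw [mem_Pfin, hz]
            · exact ⟨hxaeS hexa, by omega, by omega, hTTX⟩
            · exact ⟨hxaeS hexa, by omega, hlt, hTT2eNot u hue⟩
          · rw [hFam1, Finset.card_insert_of_notMem (by rw [Finset.mem_singleton]; exact hne9),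
              Finset.card_singleton, Afun_big (D u) (Or.inr hD4)]
            norm_num
          · rw [hFam1]
            intro z hz
            rw [Finset.mem_insert, Finset.mem_singleton] at hz
            rcases hz with hz | hz <;> rw [hz]
            · exact Or.inr ⟨hTTemod, hxaemod hexa⟩
            · exact Or.inr ⟨hTT2emod, hxaemod hexa⟩
    -- W2 : witnesses from qualifying pairs
    set mapQ : ℕ × ℕ → ℕ × ℕ :=
      fun p => (min (TT p.1) (TT p.2) + e, max (TT p.1) (TT p.2)) with hmapQdef
    have hQfacts : ∀ p ∈ Qset (e-1) D,
        mapQ p ∈ Pfin S xa ∧ (mapQ p).1 % e ≠ xa % e ∧ (mapQ p).2 % e ≠ xa % e := by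
      intro p hp
      rw [mem_Qset] at hp
      obtain ⟨hp1, hp2, hp3, hp4, hp5, hp6⟩ := hp
      have hue : p.1 < e := by omega
      have hve : p.2 < e := by omega
      have hsu := hDspec p.1 hue
      have hsv := hDspec p.2 hve
      have huS := (hTTmem p.1 hue).1
      have hvS := (hTTmem p.2 hve).1
      have huX := (hTTmem p.1 hue).2.1
      have hvX := (hTTmem p.2 hve).2.1
      have humod := (hTTmem p.1 hue).2.2
      have hvmod := (hTTmem p.2 hve).2.2
      have hune := hTTne p.1 (by omega) hue
      have hvne := hTTne p.2 (by omega) hve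
      have hmod1 : (TT p.1 + e) % e = (xa + p.1) % e := by rw [Nat.add_mod_right]; exact humod
      have hmod2 : (TT p.2 + e) % e = (xa + p.2) % e := by rw [Nat.add_mod_right]; exact hvmod
      have huvcast : (p.1 : ℤ) < (p.2 : ℤ) := by exact_mod_cast hp5
      have hvecast : (p.2 : ℤ) < (e : ℤ) := by exact_mod_cast hve
      rcases hp6 with hq | hq
      · -- 1 ≤ D p.1 - D p.2 : TT p.1 + e < TT p.2
        have hkey : TT p.1 + e < TT p.2 := by
          have h5 : (e:ℤ) * 1 ≤ (e:ℤ) * (D p.1 - D p.2) := by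
            apply mul_le_mul_of_nonneg_left hq (by positivity)
          have h5b : (e:ℤ) * (D p.1 - D p.2) = e * D p.1 - e * D p.2 := by ring
          have h6 : ((TT p.1 + e : ℕ) : ℤ) < ((TT p.2 : ℕ) : ℤ) := by
            push_cast
            omega
          exact_mod_cast h6
        have hmin : min (TT p.1) (TT p.2) = TT p.1 := min_eq_left (by omega)
        have hmax : max (TT p.1) (TT p.2) = TT p.2 := max_eq_right (by omega)
        have hmapeq : mapQ p = (TT p.1 + e, TT p.2) := by
          rw [hmapQdef]; simp only [hmin, hmax]
        rw [hmapeq]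
        refine ⟨?_, ?_, ?_⟩
        · rw [mem_Pfin]
          exact ⟨hvS, hvne, hkey, huX⟩
        · simp only
          rw [hmod1]
          exact hne0 p.1 (by omega) hue
        · simp only
          rw [hvmod]
          exact hne0 p.2 (by omega) hve
      · -- D p.1 - D p.2 ≤ -2 : TT p.2 + e < TT p.1
        have hkey : TT p.2 + e < TT p.1 := by
          have h5 : (e:ℤ) * 2 ≤ (e:ℤ) * (D p.2 - D p.1) := by
            apply mul_le_mul_of_nonneg_left (by omega) (by positivity)
          have h5b : (e:ℤ) * (D p.2 - D p.1) = e * D p.2 - e * D p.1 := by ring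
          have h6 : ((TT p.2 + e : ℕ) : ℤ) < ((TT p.1 : ℕ) : ℤ) := by
            push_cast
            omega
          exact_mod_cast h6
        have hmin : min (TT p.1) (TT p.2) = TT p.2 := min_eq_right (by omega)
        have hmax : max (TT p.1) (TT p.2) = TT p.1 := max_eq_left (by omega)
        have hmapeq : mapQ p = (TT p.2 + e, TT p.1) := by
          rw [hmapQdef]; simp only [hmin, hmax]
        rw [hmapeq]
        refine ⟨?_, ?_, ?_⟩
        · rw [mem_Pfin]
          exact ⟨huS, hune, hkey, hvX⟩
        · simp only
          rw [hmod2]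
          exact hne0 p.2 (by omega) hve
        · simp only
          rw [humod]
          exact hne0 p.1 (by omega) hue
    have hinjQ : Set.InjOn mapQ (Qset (e-1) D) := by
      intro p hp p' hp' heq
      have hp0 := mem_Qset.mp (Finset.mem_coe.mp hp)
      have hp0' := mem_Qset.mp (Finset.mem_coe.mp hp')
      obtain ⟨hp1, hp2, hp3, hp4, hp5, -⟩ := hp0
      obtain ⟨hq1, hq2, hq3, hq4, hq5, -⟩ := hp0'
      have hue : p.1 < e := by omega
      have hve : p.2 < e := by omega
      have hue' : p'.1 < e := by omega
      have hve' : p'.2 < e := by omega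
      have h1 : min (TT p.1) (TT p.2) = min (TT p'.1) (TT p'.2) := by
        have h9 := congrArg Prod.fst heq
        rw [hmapQdef] at h9
        simp only at h9
        omega
      have h2 : max (TT p.1) (TT p.2) = max (TT p'.1) (TT p'.2) := by
        have h9 := congrArg Prod.snd heq
        rw [hmapQdef] at h9
        simp only at h9
        exact h9
      rcases le_total (TT p.1) (TT p.2) with hle | hle <;>
        rcases le_total (TT p'.1) (TT p'.2) with hle' | hle'
      · rw [min_eq_left hle, min_eq_left hle'] at h1
        rw [max_eq_right hle, max_eq_right hle'] at h2
        have e1 := hTTinj _ _ hue hue' h1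
        have e2 := hTTinj _ _ hve hve' h2
        exact Prod.ext e1 e2
      · rw [min_eq_left hle, min_eq_right hle'] at h1
        rw [max_eq_right hle, max_eq_left hle'] at h2
        have e1 := hTTinj _ _ hue hve' h1
        have e2 := hTTinj _ _ hve hue' h2
        omega
      · rw [min_eq_right hle, min_eq_left hle'] at h1
        rw [max_eq_left hle, max_eq_right hle'] at h2
        have e1 := hTTinj _ _ hve hue' h1
        have e2 := hTTinj _ _ hue hve' h2
        omega
      · rw [min_eq_right hle, min_eq_right hle'] at h1
        rw [max_eq_left hle, max_eq_left hle'] at h2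
        have e1 := hTTinj _ _ hve hve' h1
        have e2 := hTTinj _ _ hue hue' h2
        exact Prod.ext e2 e1
    -- assemble
    set W1 := (Finset.Icc 1 (e-1)).biUnion Fam with hW1def
    set W2 := (Qset (e-1) D).image mapQ with hW2def
    have hFamdisj : ∀ u ∈ Finset.Icc 1 (e-1), ∀ v ∈ Finset.Icc 1 (e-1),
        u ≠ v → Disjoint (Fam u) (Fam v) := by
      intro u hu v hv huv
      rw [Finset.disjoint_left]
      intro z hzu hzv
      have hsu := (hFamAll u hu).2.2 z hzu
      have hsv := (hFamAll v hv).2.2 z hzv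
      rw [Finset.mem_Icc] at hu hv
      rcases hsu with ⟨a1, a2⟩ | ⟨a1, a2⟩ <;> rcases hsv with ⟨b1, b2⟩ | ⟨b1, b2⟩
      · exact huv (hshiftinj u v (by omega) (by omega) (a2.symm ▸ b2 ▸ rfl))
      · exact hne0 v (by omega) (by omega) (b1.symm.trans a1)
      · exact hne0 u (by omega) (by omega) (a1.symm.trans b1)
      · exact huv (hshiftinj u v (by omega) (by omega) (a1.symm ▸ b1 ▸ rfl))
    have hW1card : W1.card = ∑ u ∈ Finset.Icc 1 (e-1), (Fam u).card :=
      Finset.card_biUnion hFamdisj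
    have hW2card : W2.card = (Qset (e-1) D).card := Finset.card_image_of_injOn hinjQ
    have hdisjW : Disjoint W1 W2 := by
      rw [Finset.disjoint_left]
      intro z hz1 hz2
      obtain ⟨u, hu, hzu⟩ := Finset.mem_biUnion.mp hz1
      obtain ⟨p, hp, hpz⟩ := Finset.mem_image.mp hz2
      have hsig := (hFamAll u hu).2.2 z hzu
      have hq := hQfacts p hp
      rw [hpz] at hq
      rcases hsig with ⟨h1, -⟩ | ⟨-, h2⟩
      · exact hq.2.1 h1
      · exact hq.2.2 h2
    have hsubP : W1 ∪ W2 ⊆ Pfin S xa := by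
      apply Finset.union_subset
      · intro z hz
        obtain ⟨u, hu, hzu⟩ := Finset.mem_biUnion.mp hz
        exact (hFamAll u hu).1 hzu
      · intro z hz
        obtain ⟨p, hp, hpz⟩ := Finset.mem_image.mp hz
        rw [← hpz]
        exact (hQfacts p hp).1
    have hcardUnion : W1.card + W2.card ≤ (Pfin S xa).card := by
      rw [← Finset.card_union_of_disjoint hdisjW]
      exact Finset.card_le_card hsubP
    have hsumFam : (∑ u ∈ Finset.Icc 1 (e-1), Afun (D u)) = (W1.card : ℤ) := by
      rw [hW1card]
      push_cast
      apply Finset.sum_congr rfl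
      intro u hu
      exact ((hFamAll u hu).2.1).symm
    rw [hsumFam, ← hW2card]
    push_cast
    omega

  -- ===== apply lemD and conclude =====
  obtain ⟨k, hk⟩ := hodd
  have hek : e - 1 = 2 * k := by omega
  have hlemD := lemD k D (by
    intro u h1 h2 h3
    exact hcon u h1 (by omega) h3)
  rw [← hek] at hlemD
  have hsplitAW : ∑ u ∈ Finset.Icc 1 (e-1), (Afun (D u) + wf (D u))
      = (∑ u ∈ Finset.Icc 1 (e-1), Afun (D u)) + ∑ u ∈ Finset.Icc 1 (e-1), wf (D u) := by
    rw [← Finset.sum_add_distrib]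
  rw [hsplitAW] at hlemD
  have hgap : ((xa:ℤ) - ((S.filter (· < xa)).card : ℤ)) = (gapc S xa : ℤ) := by
    push_cast
    omega
  have hbrank : (brank S : ℤ) = ((Pfin S xa).card : ℤ) + (gapc S xa : ℤ) := by
    exact_mod_cast hcardP.symm
  rw [hba, hgap, hbrank, hwcount]
  omega



end MainProof
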